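/- arXiv:2008.11551 — 2 statements merged into one kernel-verified Lean document; each statement's English description precedes it below -/
import Mathlib

section
/- Let β ∈ (0,1), φ₀(x) = −(1/(2π(1−β)))·log(1 + (π/(2(1−β)))|x|^{2(1−β)}) and let B_R⁺ denote the upper half-disc of radius R centered at 0. Then ∫_{B_R⁺} |∇φ₀|² dx = (1/π)·log R + (1/(2π(1−β)))·log(π/(2(1−β))) − 1/(2π(1−β)) + o(1) as R → ∞. -/
open Real MeasureTheory Set Filter
noncomputable section
abbrev E2 := EuclideanSpace ℝ (Fin 2)

namespace Stmt5Aux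

def cc (β : ℝ) : ℝ := π / (2 * (1 - β))

def Gf (β : ℝ) (r : ℝ) : ℝ :=
  (cc β / π * r ^ (2 * (1 - β) - 1) / (1 + cc β * r ^ (2 * (1 - β)))) ^ 2

def Ff (β : ℝ) (r : ℝ) : ℝ :=
  1 / (2 * (1 - β) * π ^ 2) *
    (Real.log (1 + cc β * r ^ (2 * (1 - β))) + (1 + cc β * r ^ (2 * (1 - β)))⁻¹)

lemma cc_pos (hβ : β ∈ Set.Ioo (0:ℝ) 1) : 0 < cc β := by
  have : (0:ℝ) < 1 - β := by linarith [hβ.2]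
  have := Real.pi_pos
  unfold cc; positivity


lemma hasDerivAt_Ff (hβ : β ∈ Set.Ioo (0:ℝ) 1) {r : ℝ} (hr : 0 < r) :
    HasDerivAt (Ff β) (r * Gf β r) r := by
  obtain ⟨hβ0, hβ1⟩ := hβ
  have hp : (0:ℝ) < 1 - β := by linarith
  have hc := cc_pos ⟨hβ0, hβ1⟩
  have hrpow : (0:ℝ) < r ^ (2 * (1 - β)) := Real.rpow_pos_of_pos hr _
  have hden : (0:ℝ) < 1 + cc β * r ^ (2 * (1 - β)) := by positivity
  -- derivative of u(r) = 1 + c * r^(2p)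
  have hu : HasDerivAt (fun r : ℝ => 1 + cc β * r ^ (2 * (1 - β)))
      (cc β * (2 * (1 - β) * r ^ (2 * (1 - β) - 1))) r := by
    have h1 : HasDerivAt (fun r : ℝ => r ^ (2 * (1 - β)))
        (2 * (1 - β) * r ^ (2 * (1 - β) - 1)) r :=
      Real.hasDerivAt_rpow_const (Or.inl hr.ne')
    simpa using ((h1.const_mul (cc β)).const_add 1)
  have hlog : HasDerivAt (fun r : ℝ => Real.log (1 + cc β * r ^ (2 * (1 - β))))
      ((cc β * (2 * (1 - β) * r ^ (2 * (1 - β) - 1))) / (1 + cc β * r ^ (2 * (1 - β)))) r :=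
    hu.log hden.ne'
  have hinv : HasDerivAt (fun r : ℝ => (1 + cc β * r ^ (2 * (1 - β)))⁻¹)
      (-(cc β * (2 * (1 - β) * r ^ (2 * (1 - β) - 1))) /
        (1 + cc β * r ^ (2 * (1 - β))) ^ 2) r := by
    exact hu.inv hden.ne'
  have := ((hlog.add hinv).const_mul (1 / (2 * (1 - β) * π ^ 2)))
  refine this.congr_deriv ?_
  set u := r ^ (2 * (1 - β)) with hu_def
  set v := r ^ (2 * (1 - β) - 1) with hv_def
  have hru : r * v = u := by
    rw [hu_def, hv_def, ← Real.rpow_one_add' hr.le (by intro h; linarith), add_sub_cancel]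
  have hπ := Real.pi_ne_zero
  rw [← hru] at hden ⊢
  rw [Gf, ← hu_def, ← hv_def, ← hru]
  have hp' : (2 * (1 - β)) ≠ 0 := by positivity
  field_simp
  ring


lemma continuous_aux (hβ : β ∈ Set.Ioo (0:ℝ) 1) :
    Continuous (fun r : ℝ => r ^ (2 * (1 - β))) := by
  have hp : (0:ℝ) < 2 * (1 - β) := by nlinarith [hβ.2]
  exact continuous_iff_continuousAt.2 fun x =>
    Real.continuousAt_rpow_const x _ (Or.inr hp.le)


lemma continuousOn_Ff (hβ : β ∈ Set.Ioo (0:ℝ) 1) {R : ℝ} :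
    ContinuousOn (Ff β) (Set.Icc 0 R) := by
  have hc : 0 < cc β := by
    have : (0:ℝ) < 1 - β := by linarith [hβ.2]
    have := Real.pi_pos
    unfold cc; positivity
  have hcont := continuous_aux hβ
  have hden : ∀ r ∈ Set.Icc (0:ℝ) R, (0:ℝ) < 1 + cc β * r ^ (2 * (1 - β)) := by
    intro r hr
    have : (0:ℝ) ≤ r ^ (2 * (1 - β)) := Real.rpow_nonneg hr.1 _
    positivity
  apply ContinuousOn.mul continuousOn_const
  apply ContinuousOn.add
  · exact (Real.continuousOn_log.comp ((continuous_const.add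
      (continuous_const.mul hcont)).continuousOn) (fun r hr => (hden r hr).ne')).congr
      (fun r hr => rfl)
  · exact ContinuousOn.inv₀ (continuous_const.add (continuous_const.mul hcont)).continuousOn
      (fun r hr => (hden r hr).ne')

lemma oneD_integral (hβ : β ∈ Set.Ioo (0:ℝ) 1) {R : ℝ} (hR : 0 < R)
    (hD : ∀ r ∈ Set.Ioo 0 R, HasDerivAt (Ff β) (r * Gf β r) r) :
    ∫ r in Set.Ioo 0 R, r * Gf β r = Ff β R - Ff β 0 := by
  have hnonneg : ∀ r ∈ Set.Ioo (0:ℝ) R, 0 ≤ r * Gf β r := fun r hr => by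
    have : (0:ℝ) ≤ Gf β r := sq_nonneg _
    nlinarith [hr.1]
  have hcont := continuousOn_Ff hβ (R := R)
  have hint : IntegrableOn (fun r => r * Gf β r) (Set.Ioc 0 R) :=
    intervalIntegral.integrableOn_deriv_of_nonneg hcont hD hnonneg
  have := intervalIntegral.integral_eq_sub_of_hasDerivAt_of_le hR.le hcont hD
    ((intervalIntegrable_iff_integrableOn_Ioc_of_le hR.le).2 hint)
  rw [← MeasureTheory.integral_Ioc_eq_integral_Ioo, ← intervalIntegral.integral_of_le hR.le, this]

lemma norm_fderiv_sq {β : ℝ} (hβ : β ∈ Set.Ioo (0:ℝ) 1) (φ₀ : E2 → ℝ)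
    (hφ : ∀ x : E2, φ₀ x =
      -(1 / (2 * π * (1 - β))) * Real.log (1 + (π / (2 * (1 - β))) * ‖x‖ ^ (2 * (1 - β))))
    {x : E2} (hx : x ≠ 0) :
    ‖fderiv ℝ φ₀ x‖ ^ 2 = Gf β ‖x‖ := by
  obtain ⟨hβ0, hβ1⟩ := hβ
  have hp : (0:ℝ) < 1 - β := by linarith
  have hπ := Real.pi_pos
  have hc : 0 < cc β := by unfold cc; positivity
  set a : ℝ := 1 / (2 * π * (1 - β)) with ha_def
  set p : ℝ := 1 - β with hp_def
  set h : ℝ → ℝ := fun s => -a * Real.log (1 + cc β * s ^ p) with hh_def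
  have hφ0 : φ₀ = fun y : E2 => h (‖y‖ ^ 2) := by
    funext y
    rw [hφ y, hh_def]
    have h2 : ((‖y‖ ^ 2 : ℝ) : ℝ) ^ p = ‖y‖ ^ (2 * p) := by
      rw [← Real.rpow_natCast ‖y‖ 2, ← Real.rpow_mul (norm_nonneg y)]
      norm_num
    show _ = -a * Real.log (1 + cc β * (‖y‖ ^ 2 : ℝ) ^ p)
    rw [h2]
    simp only [cc, ← hp_def]
  have hr : (0:ℝ) < ‖x‖ := norm_pos_iff.2 hx
  set r : ℝ := ‖x‖ with hr_def
  have hs : (0:ℝ) < r ^ 2 := by positivity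
  have hsp : ((r:ℝ) ^ 2) ^ p = r ^ (2 * p) := by
    rw [← Real.rpow_natCast r 2, ← Real.rpow_mul hr.le]; norm_num
  have hsp' : ((r:ℝ) ^ 2) ^ (p - 1) = r ^ (2 * p - 2) := by
    rw [← Real.rpow_natCast r 2, ← Real.rpow_mul hr.le]; ring_nf
  have hrpow : (0:ℝ) < r ^ (2 * p) := Real.rpow_pos_of_pos hr _
  have hden : (0:ℝ) < 1 + cc β * r ^ (2 * p) := by positivity
  -- derivative of h at s = r^2
  have hu : HasDerivAt (fun s : ℝ => 1 + cc β * s ^ p)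
      (cc β * (p * (r ^ 2) ^ (p - 1))) (r ^ 2) := by
    simpa using ((Real.hasDerivAt_rpow_const
      (x := r ^ 2) (p := p) (Or.inl hs.ne')).const_mul (cc β)).const_add 1
  have hden' : (0:ℝ) < 1 + cc β * (r ^ 2) ^ p := by rw [hsp]; exact hden
  have hd : HasDerivAt h
      (-a * (cc β * (p * (r ^ 2) ^ (p - 1)) / (1 + cc β * (r ^ 2) ^ p))) (r ^ 2) := by
    exact (hu.log hden'.ne').const_mul (-a)
  -- derivative of the squared norm
  have hsq : HasFDerivAt (fun y : E2 => ‖y‖ ^ 2) ((2:ℝ) • innerSL ℝ x) x := by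
    have := (hasStrictFDerivAt_norm_sq x).hasFDerivAt
    refine this.congr_fderiv ?_
    ext y; simp [two_smul]
  have hcomp : HasFDerivAt φ₀
      ((-a * (cc β * (p * (r ^ 2) ^ (p - 1)) / (1 + cc β * (r ^ 2) ^ p))) •
        ((2:ℝ) • innerSL ℝ x)) x := by
    rw [hφ0]
    have := hd.comp_hasFDerivAt x hsq; exact this
  rw [hcomp.fderiv]
  rw [norm_smul, norm_smul, innerSL_apply_norm, Real.norm_eq_abs, Real.norm_eq_abs]
  rw [mul_pow, mul_pow, sq_abs, sq_abs, hsp, hsp']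
  -- algebra
  have hr21 : r ^ (2 * p - 1) = r ^ (2 * p - 2) * r := by
    rw [show (2*p - 1) = (2*p-2) + 1 by ring, Real.rpow_add hr, Real.rpow_one]
  rw [Gf, ← hp_def, hr21, ha_def]
  have hπ' := Real.pi_ne_zero
  field_simp
  ring

lemma halfdisc_integral (β : ℝ) {R : ℝ} (hR : 0 < R) :
    ∫ x in {x : E2 | ‖x‖ < R ∧ 0 < x 1}, Gf β ‖x‖ =
      π * ∫ r in Set.Ioo 0 R, r * Gf β r := by
  classical
  set T : E2 ≃ᵐ ℝ × ℝ :=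
    (MeasurableEquiv.toLp 2 (Fin 2 → ℝ)).symm.trans (MeasurableEquiv.finTwoArrow) with hT
  have hTmp : MeasurePreserving T volume volume :=
    (volume_preserving_finTwoArrow ℝ).comp
      (EuclideanSpace.volume_preserving_symm_measurableEquiv_toLp (Fin 2))
  have hTx : ∀ x : E2, T x = (x 0, x 1) := fun x => rfl
  set s : Set (ℝ × ℝ) := {p | p.1 ^ 2 + p.2 ^ 2 < R ^ 2 ∧ 0 < p.2} with hs_def
  have hs_meas : MeasurableSet s := by
    apply MeasurableSet.inter
    · exact measurableSet_lt ((measurable_fst.pow_const 2).add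
        (measurable_snd.pow_const 2)) measurable_const
    · exact measurableSet_lt measurable_const measurable_snd
  set g : ℝ × ℝ → ℝ := fun p => Gf β (Real.sqrt (p.1 ^ 2 + p.2 ^ 2)) with hg_def
  have hnorm : ∀ x : E2, ‖x‖ = Real.sqrt ((x 0) ^ 2 + (x 1) ^ 2) := by
    intro x
    rw [EuclideanSpace.norm_eq]
    simp [Fin.sum_univ_two, Real.norm_eq_abs, sq_abs]
  have hset : {x : E2 | ‖x‖ < R ∧ 0 < x 1} = T ⁻¹' s := by
    ext x
    simp only [mem_setOf_eq, mem_preimage, hTx, hs_def, mem_setOf_eq]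
    constructor
    · rintro ⟨h1, h2⟩
      refine ⟨?_, h2⟩
      rw [hnorm x] at h1
      exact (Real.sqrt_lt' hR).1 h1
    · rintro ⟨h1, h2⟩
      refine ⟨?_, h2⟩
      rw [hnorm x]
      exact (Real.sqrt_lt' hR).2 h1
  have step1 : ∫ x in {x : E2 | ‖x‖ < R ∧ 0 < x 1}, Gf β ‖x‖ = ∫ p in s, g p := by
    rw [hset, ← hTmp.setIntegral_preimage_emb T.measurableEmbedding g s]
    apply setIntegral_congr_fun (hs_meas.preimage T.measurable)
    intro x _
    simp only [hg_def, hTx x]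
    rw [hnorm x]
  rw [step1, ← integral_indicator hs_meas, ← integral_comp_polarCoord_symm (s.indicator g)]
  have step2 : ∀ p ∈ polarCoord.target,
      p.1 • s.indicator g (polarCoord.symm p) =
        (Set.Ioo (0:ℝ) R ×ˢ Set.Ioo (0:ℝ) π).indicator (fun q => q.1 * Gf β q.1) p := by
    rintro ⟨r, θ⟩ hp
    simp only [polarCoord_target, mem_prod, mem_Ioi, mem_Ioo] at hp
    have hr := hp.1
    have hθ1 := hp.2.1
    have hθ2 := hp.2.2
    have hsymm : polarCoord.symm (r, θ) = (r * Real.cos θ, r * Real.sin θ) := rfl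
    have hsq : (r * Real.cos θ) ^ 2 + (r * Real.sin θ) ^ 2 = r ^ 2 := by
      have := Real.sin_sq_add_cos_sq θ
      ring_nf
      nlinarith [this]
    by_cases hmem : (r, θ) ∈ Set.Ioo (0:ℝ) R ×ˢ Set.Ioo (0:ℝ) π
    · simp only [mem_prod, mem_Ioo] at hmem
      have hsin : 0 < Real.sin θ := Real.sin_pos_of_pos_of_lt_pi hmem.2.1 hmem.2.2
      have hmem_s : polarCoord.symm (r, θ) ∈ s := by
        rw [hsymm, hs_def]
        constructor
        · show (r * Real.cos θ) ^ 2 + (r * Real.sin θ) ^ 2 < R ^ 2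
          rw [hsq]
          nlinarith [hmem.1.1, hmem.1.2]
        · exact mul_pos hr hsin
      rw [Set.indicator_of_mem hmem_s, Set.indicator_of_mem (by exact mem_prod.2 ⟨hmem.1, hmem.2⟩)]
      rw [hg_def, hsymm]
      simp only
      rw [hsq, Real.sqrt_sq hr.le]
      rfl
    · have hnot : polarCoord.symm (r, θ) ∉ s := by
        rw [hsymm, hs_def]
        intro hcon
        obtain ⟨hc1, hc2⟩ := hcon
        rw [hsq] at hc1
        have hc2' : 0 < r * Real.sin θ := hc2
        apply hmem
        simp only [mem_prod, mem_Ioo]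
        have hrR : r < R := by nlinarith
        have hsin : 0 < Real.sin θ := by
          rcases lt_or_ge 0 (Real.sin θ) with h | h
          · exact h
          · exfalso; nlinarith [hc2']
        have hθpos : 0 < θ := by
          by_contra hle
          push_neg at hle
          have := Real.sin_nonpos_of_nonpos_of_neg_pi_le hle hθ1.le
          linarith
        have hθpi : θ < π := hθ2
        exact ⟨⟨hr, hrR⟩, hθpos, hθpi⟩
      rw [Set.indicator_of_notMem hnot, Set.indicator_of_notMem hmem, smul_zero]
  rw [setIntegral_congr_fun polarCoord.open_target.measurableSet step2]
  rw [setIntegral_indicator (measurableSet_Ioo.prod measurableSet_Ioo)]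
  have hsub : polarCoord.target ∩ (Set.Ioo (0:ℝ) R ×ˢ Set.Ioo (0:ℝ) π) =
      Set.Ioo (0:ℝ) R ×ˢ Set.Ioo (0:ℝ) π := by
    apply inter_eq_self_of_subset_right
    rw [polarCoord_target]
    apply Set.prod_mono
    · exact Ioo_subset_Ioi_self
    · exact Ioo_subset_Ioo (by linarith [Real.pi_pos]) le_rfl
  rw [hsub]
  have : ∫ p in Set.Ioo (0:ℝ) R ×ˢ Set.Ioo (0:ℝ) π, p.1 * Gf β p.1 =
      (∫ r in Set.Ioo (0:ℝ) R, r * Gf β r) * (∫ θ in Set.Ioo (0:ℝ) π, (1:ℝ)) := by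
    rw [MeasureTheory.Measure.volume_eq_prod]
    have := MeasureTheory.setIntegral_prod_mul (μ := (volume : Measure ℝ))
      (ν := (volume : Measure ℝ)) (L := ℝ) (fun r => r * Gf β r) (fun _ => (1:ℝ))
      (Set.Ioo (0:ℝ) R) (Set.Ioo (0:ℝ) π)
    simpa using this
  rw [this]
  have : ∫ θ in Set.Ioo (0:ℝ) π, (1:ℝ) = π := by
    simp [Real.volume_Ioo, ENNReal.toReal_ofReal Real.pi_pos.le, Real.pi_pos.le]
  rw [this, mul_comm]

lemma err_tendsto {β : ℝ} (hβ : β ∈ Set.Ioo (0:ℝ) 1) :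
    Tendsto (fun R => π * (Ff β R - Ff β 0) -
      ((1 / π) * Real.log R + (1 / (2 * π * (1 - β))) * Real.log (cc β)
        - 1 / (2 * π * (1 - β)))) atTop (nhds 0) := by
  obtain ⟨hβ0, hβ1⟩ := hβ
  have hp : (0:ℝ) < 1 - β := by linarith
  have hπ := Real.pi_pos
  have hc : 0 < cc β := by unfold cc; positivity
  set a : ℝ := 1 / (2 * π * (1 - β)) with ha_def
  have ha : 0 < a := by rw [ha_def]; positivity
  set u : ℝ → ℝ := fun R => cc β * R ^ (2 * (1 - β)) with hu_def
  have hu_top : Tendsto u atTop atTop := by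
    rw [hu_def]
    exact (tendsto_rpow_atTop (by linarith)).const_mul_atTop hc
  have huinv : Tendsto (fun R => (u R)⁻¹) atTop (nhds 0) :=
    tendsto_inv_atTop_zero.comp hu_top
  have h1uinv : Tendsto (fun R => (1 + u R)⁻¹) atTop (nhds 0) :=
    tendsto_inv_atTop_zero.comp (tendsto_atTop_add_const_left _ 1 hu_top)
  have hlog : Tendsto (fun R => Real.log (1 + (u R)⁻¹)) atTop (nhds 0) := by
    have : Tendsto (fun R => 1 + (u R)⁻¹) atTop (nhds 1) := by
      simpa using tendsto_const_nhds.add huinv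
    have := ((Real.continuousAt_log one_ne_zero).tendsto).comp this
    simpa [Function.comp_def] using this
  have key : Tendsto (fun R => a * Real.log (1 + (u R)⁻¹) + a * (1 + u R)⁻¹)
      atTop (nhds 0) := by
    have := (hlog.const_mul a).add (h1uinv.const_mul a)
    simpa using this
  apply key.congr'
  filter_upwards [eventually_ge_atTop (1:ℝ)] with R hR
  have hR0 : (0:ℝ) < R := by linarith
  have hrpow : (0:ℝ) < R ^ (2 * (1 - β)) := Real.rpow_pos_of_pos hR0 _
  have hu0 : 0 < u R := by rw [hu_def]; positivity
  have hu1 : (0:ℝ) < 1 + u R := by linarith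
  -- Ff β 0
  have hF0 : Ff β 0 = 1 / (2 * (1 - β) * π ^ 2) := by
    rw [Ff, Real.zero_rpow (by positivity : (2 * (1 - β)) ≠ 0)]
    simp
  have hFR : π * (Ff β R - Ff β 0) =
      a * (Real.log (1 + u R) + (1 + u R)⁻¹) - a := by
    rw [hF0, Ff, ha_def, hu_def]
    field_simp
  rw [hFR]
  have h2 : Real.log (1 + (u R)⁻¹) = Real.log (1 + u R) - Real.log (u R) := by
    rw [show (1 + (u R)⁻¹) = (1 + u R) / u R by field_simp; ring]
    exact Real.log_div hu1.ne' hu0.ne'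
  have h3 : Real.log (u R) = Real.log (cc β) + 2 * (1 - β) * Real.log R := by
    rw [hu_def]
    simp only
    rw [Real.log_mul hc.ne' (by positivity), Real.log_rpow hR0]
  have hap : 1 / π = a * (2 * (1 - β)) := by
    rw [ha_def]; field_simp
  rw [h2, h3, hap]
  ring

end Stmt5Aux

open Stmt5Aux in
theorem stmt5 (β : ℝ) (hβ : β ∈ Set.Ioo (0:ℝ) 1) (φ₀ : E2 → ℝ)
    (hφ : ∀ x : E2, φ₀ x =
      -(1 / (2 * π * (1 - β))) * Real.log (1 + (π / (2 * (1 - β))) * ‖x‖ ^ (2 * (1 - β)))) :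
    ∃ err : ℝ → ℝ, Tendsto err atTop (nhds 0) ∧ ∀ R : ℝ, 0 < R →
      (∫ x in {x : E2 | ‖x‖ < R ∧ 0 < x 1}, ‖fderiv ℝ φ₀ x‖ ^ 2) =
        (1 / π) * Real.log R + (1 / (2 * π * (1 - β))) * Real.log (π / (2 * (1 - β)))
          - 1 / (2 * π * (1 - β)) + err R := by
  refine ⟨fun R => π * (Ff β R - Ff β 0) -
      ((1 / π) * Real.log R + (1 / (2 * π * (1 - β))) * Real.log (cc β)
        - 1 / (2 * π * (1 - β))), ?_, ?_⟩
  · exact err_tendsto hβ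
  · intro R hR
    have hmeas : MeasurableSet {x : E2 | ‖x‖ < R ∧ 0 < x 1} := by
      have h1 : MeasurableSet {x : E2 | ‖x‖ < R} :=
        measurableSet_lt (continuous_norm.measurable) measurable_const
      have h2 : MeasurableSet {x : E2 | 0 < x 1} :=
        measurableSet_lt measurable_const (EuclideanSpace.proj (1 : Fin 2)).continuous.measurable
      exact (h1.inter h2 : _)
    have hcongr : ∫ x in {x : E2 | ‖x‖ < R ∧ 0 < x 1}, ‖fderiv ℝ φ₀ x‖ ^ 2 =
        ∫ x in {x : E2 | ‖x‖ < R ∧ 0 < x 1}, Gf β ‖x‖ := by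
      apply setIntegral_congr_fun hmeas
      intro x hx
      have hx0 : x ≠ 0 := by
        intro h
        rw [h] at hx
        simpa using hx.2
      exact norm_fderiv_sq hβ φ₀ hφ hx0
    rw [hcongr, halfdisc_integral β hR,
      oneD_integral hβ hR (fun r hr => hasDerivAt_Ff hβ hr.1)]
    simp only [cc]
    ring
end
end

section
/- Let β ∈ (0,1), δ > 0, α > 2π(1−β), and for 0 < l < δ let u_l be the Moser function with u_l = (1/√π)√(log(δ/l)) on B_l⁺(0). Then ∫_{B_l⁺(0)} |x|^{−2β} e^{α u_l²} dx ≥ (π/(2(1−β))) · δ^{α/π} · l^{2(1−β) − α/π}, and in particular this quantity tends to +∞ as l → 0⁺ when α > 2π(1−β). -/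
open Real MeasureTheory Set Filter
noncomputable section
-- key radial integral lemma
lemma key (β l : ℝ) (hβ : β ∈ Set.Ioo (0:ℝ) 1) (hl : 0 < l) :
    ∫ x in {x : E2 | ‖x‖ < l ∧ 0 < x 1}, ‖x‖ ^ (-(2 * β)) =
      l ^ (2 - 2*β) / (2 - 2*β) * π := by
  have hS : MeasurableSet {x : E2 | ‖x‖ < l ∧ 0 < x 1} := by
    have h1 : IsOpen {x : E2 | ‖x‖ < l} := isOpen_lt continuous_norm continuous_const
    have h2 : IsOpen {x : E2 | 0 < x 1} := by
      exact isOpen_lt continuous_const (EuclideanSpace.proj (1 : Fin 2)).continuous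
    exact (h1.inter h2).measurableSet
  set f2d : ℝ × ℝ → ℝ := fun y =>
    if Real.sqrt (y.1^2 + y.2^2) < l ∧ 0 < y.2 then Real.sqrt (y.1^2 + y.2^2) ^ (-(2*β)) else 0
    with hf2d
  have hnorm : ∀ x : E2, ‖x‖ = Real.sqrt ((x 0)^2 + (x 1)^2) := by
    intro x
    rw [EuclideanSpace.norm_eq, Fin.sum_univ_two]
    simp [sq_abs]
  have hφ : MeasurePreserving
      (((MeasurableEquiv.toLp 2 (Fin 2 → ℝ)).symm).trans (MeasurableEquiv.finTwoArrow)) volume volume :=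
    (volume_preserving_finTwoArrow ℝ).comp (EuclideanSpace.volume_preserving_symm_measurableEquiv_toLp (Fin 2))
  have step1 : ∫ x in {x : E2 | ‖x‖ < l ∧ 0 < x 1}, ‖x‖ ^ (-(2 * β)) = ∫ y, f2d y := by
    rw [← integral_indicator hS, ← hφ.integral_comp']
    congr 1; ext x
    have : (((MeasurableEquiv.toLp 2 (Fin 2 → ℝ)).symm).trans (MeasurableEquiv.finTwoArrow)) x
        = (x 0, x 1) := rfl
    rw [this, Set.indicator_apply, hf2d]
    simp only [mem_setOf_eq, hnorm x]
  have step2 : ∫ y, f2d y = ∫ p in polarCoord.target, p.1 • f2d (polarCoord.symm p) :=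
    (integral_comp_polarCoord_symm f2d).symm
  set F1 : ℝ → ℝ := (Set.Ioo (0:ℝ) l).indicator (fun r => r ^ (1-2*β)) with hF1
  set F2 : ℝ → ℝ := {θ : ℝ | 0 < Real.sin θ}.indicator (fun _ => 1) with hF2
  have step3 : ∫ p in polarCoord.target, p.1 • f2d (polarCoord.symm p)
      = ∫ p in polarCoord.target, F1 p.1 * F2 p.2 := by
    apply setIntegral_congr_fun polarCoord.open_target.measurableSet
    rintro ⟨r, θ⟩ ⟨hr', hθ'⟩
    have hr : (0:ℝ) < r := hr'
    have hsymm : polarCoord.symm (r, θ) = (r * Real.cos θ, r * Real.sin θ) := rfl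
    have hsq : Real.sqrt ((r * Real.cos θ)^2 + (r * Real.sin θ)^2) = r := by
      have h : (r * Real.cos θ)^2 + (r * Real.sin θ)^2 = r^2 := by
        rw [mul_pow, mul_pow, ← mul_add, Real.cos_sq_add_sin_sq, mul_one]
      rw [h, Real.sqrt_sq hr.le]
    simp only []
    rw [hsymm, hf2d]
    simp only [hsq, smul_eq_mul]
    by_cases hcond : r < l ∧ 0 < Real.sin θ
    · rw [if_pos ⟨hcond.1, mul_pos hr hcond.2⟩, hF1, hF2,
        Set.indicator_of_mem (Set.mem_Ioo.mpr ⟨hr, hcond.1⟩),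
        Set.indicator_of_mem (show θ ∈ {θ : ℝ | 0 < Real.sin θ} from hcond.2) (fun _ => (1:ℝ)), mul_one]
      rw [show r * r ^ (-(2*β)) = r ^ (1:ℝ) * r ^ (-(2*β)) by rw [Real.rpow_one],
        ← Real.rpow_add hr]
      ring_nf
    · have hcond' : ¬ (r < l ∧ 0 < r * Real.sin θ) := by
        rintro ⟨h1, h2⟩
        have hs : 0 < Real.sin θ := by
          by_contra hs
          push_neg at hs
          nlinarith
        exact hcond ⟨h1, hs⟩
      rw [if_neg hcond', mul_zero]
      rcases not_and_or.mp hcond with h | h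
      · rw [hF1, Set.indicator_of_notMem (fun hm => h (Set.mem_Ioo.mp hm).2), zero_mul]
      · rw [hF2, Set.indicator_of_notMem
          (show θ ∉ {θ : ℝ | 0 < Real.sin θ} from h) (fun _ => (1:ℝ)), mul_zero]
  have step4 : ∫ p in polarCoord.target, F1 p.1 * F2 p.2
      = (∫ r in Set.Ioi (0:ℝ), F1 r) * ∫ θ in Set.Ioo (-π) π, F2 θ := by
    rw [show polarCoord.target = Set.Ioi (0:ℝ) ×ˢ Set.Ioo (-π) π from rfl,
      Measure.volume_eq_prod]
    exact setIntegral_prod_mul F1 F2 _ _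
  have int1 : ∫ r in Set.Ioi (0:ℝ), F1 r = l ^ (2-2*β) / (2-2*β) := by
    rw [hF1, setIntegral_indicator measurableSet_Ioo,
      Set.inter_eq_self_of_subset_right Set.Ioo_subset_Ioi_self,
      ← MeasureTheory.integral_Ioc_eq_integral_Ioo,
      ← intervalIntegral.integral_of_le hl.le,
      integral_rpow (Or.inl (by linarith [hβ.2]))]
    have he : (1:ℝ) - 2*β + 1 = 2 - 2*β := by ring
    rw [he, Real.zero_rpow (by linarith [hβ.2] : (2:ℝ) - 2*β ≠ 0), sub_zero]
  have int2 : ∫ θ in Set.Ioo (-π) π, F2 θ = π := by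
    have hset : Set.Ioo (-π) π ∩ {θ : ℝ | 0 < Real.sin θ} = Set.Ioo 0 π := by
      ext θ
      simp only [Set.mem_inter_iff, Set.mem_Ioo, Set.mem_setOf_eq]
      constructor
      · rintro ⟨⟨h1, h2⟩, h3⟩
        refine ⟨?_, h2⟩
        by_contra h
        push_neg at h
        have h4 : 0 ≤ Real.sin (-θ) :=
          Real.sin_nonneg_of_nonneg_of_le_pi (by linarith) (by linarith)
        rw [Real.sin_neg] at h4; linarith
      · rintro ⟨h1, h2⟩
        exact ⟨⟨by linarith [Real.pi_pos], h2⟩, Real.sin_pos_of_pos_of_lt_pi h1 h2⟩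
    rw [hF2, setIntegral_indicator (isOpen_lt continuous_const Real.continuous_sin).measurableSet,
      hset, setIntegral_const]
    simp [Real.volume_Ioo, Real.pi_pos.le]
  rw [step1, step2, step3, step4, int1, int2]


theorem stmt7 (β δ α : ℝ) (hβ : β ∈ Set.Ioo (0:ℝ) 1) (hδ : 0 < δ)
    (hα : 2 * π * (1 - β) < α) :
    (∀ l ∈ Set.Ioo (0:ℝ) δ, ∀ u : E2 → ℝ,
      (∀ x : E2, ‖x‖ ≤ l → u x = (1 / Real.sqrt π) * Real.sqrt (Real.log (δ / l))) →
      (π / (2 * (1 - β))) * δ ^ (α / π) * l ^ (2 * (1 - β) - α / π) ≤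
        ∫ x in {x : E2 | ‖x‖ < l ∧ 0 < x 1}, ‖x‖ ^ (-(2 * β)) * Real.exp (α * u x ^ 2)) ∧
    Tendsto (fun l : ℝ => (π / (2 * (1 - β))) * δ ^ (α / π) * l ^ (2 * (1 - β) - α / π))
      (nhdsWithin 0 (Set.Ioi 0)) atTop := by
  obtain ⟨hβ0, hβ1⟩ := hβ
  have hπ : (0:ℝ) < π := Real.pi_pos
  constructor
  · rintro l ⟨hl, hld⟩ u hu
    have hS : MeasurableSet {x : E2 | ‖x‖ < l ∧ 0 < x 1} := by
      have h1 : IsOpen {x : E2 | ‖x‖ < l} := isOpen_lt continuous_norm continuous_const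
      have h2 : IsOpen {x : E2 | 0 < x 1} :=
        isOpen_lt continuous_const (EuclideanSpace.proj (1 : Fin 2)).continuous
      exact (h1.inter h2).measurableSet
    have hK : Set.EqOn (fun x : E2 => ‖x‖ ^ (-(2 * β)) * Real.exp (α * u x ^ 2))
        (fun x : E2 => ‖x‖ ^ (-(2 * β)) * ((δ/l) ^ (α/π))) {x : E2 | ‖x‖ < l ∧ 0 < x 1} := by
      intro x hx
      simp only []
      rw [hu x hx.1.le]
      congr 1
      have hL : 0 ≤ Real.log (δ / l) := Real.log_nonneg (by rw [le_div_iff₀ hl]; linarith)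
      have hc : ((1 / Real.sqrt π) * Real.sqrt (Real.log (δ / l))) ^ 2 = Real.log (δ / l) / π := by
        rw [mul_pow, div_pow, one_pow, Real.sq_sqrt hπ.le, Real.sq_sqrt hL]
        ring
      rw [hc, Real.rpow_def_of_pos (div_pos hδ hl)]
      congr 1
      ring
    have e1 : ∫ x in {x : E2 | ‖x‖ < l ∧ 0 < x 1}, ‖x‖ ^ (-(2 * β)) * Real.exp (α * u x ^ 2)
        = (∫ x in {x : E2 | ‖x‖ < l ∧ 0 < x 1}, ‖x‖ ^ (-(2 * β))) * ((δ/l) ^ (α/π)) := by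
      rw [setIntegral_congr_fun hS hK]
      exact integral_mul_const _ _
    apply le_of_eq
    rw [e1, key β l ⟨hβ0, hβ1⟩ hl]
    rw [Real.div_rpow hδ.le hl.le, Real.rpow_sub hl]
    have h22 : 2*(1-β) = 2 - 2*β := by ring
    rw [h22]
    have hne1 : (2:ℝ) - 2*β ≠ 0 := by linarith
    have hne2 : l ^ (α/π) ≠ 0 := (Real.rpow_pos_of_pos hl _).ne'
    field_simp
  · have hC : 0 < π / (2*(1-β)) * δ ^ (α/π) :=
      mul_pos (div_pos hπ (by linarith)) (Real.rpow_pos_of_pos hδ _)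
    have he : 2*(1-β) - α/π < 0 := by
      rw [sub_neg, lt_div_iff₀ hπ]
      linarith [show 2*(1-β)*π = 2*π*(1-β) from by ring]
    have h1 : Tendsto (fun l : ℝ => l ^ (2*(1-β) - α/π)) (nhdsWithin 0 (Set.Ioi 0)) atTop := by
      have h2 : Tendsto (fun l : ℝ => (l⁻¹) ^ (-(2*(1-β) - α/π))) (nhdsWithin 0 (Set.Ioi 0)) atTop :=
        (tendsto_rpow_atTop (by linarith)).comp tendsto_inv_nhdsGT_zero
      apply h2.congr'
      filter_upwards [self_mem_nhdsWithin] with x hx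
      rw [Real.inv_rpow (le_of_lt hx), ← Real.rpow_neg (le_of_lt hx), neg_neg]
    exact h1.const_mul_atTop hC
end
end
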